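/- There exist nonnegative rationals fʳᵢⱼ, fʷᵢⱼ (i, j ∈ {0,1}) with fᵢⱼ = fʳᵢⱼ + fʷᵢⱼ, f₁₁ + f₀₁ > 0, f₁₀ + f₀₀ > 0, and not all fʷᵢⱼ equal to 0, such that the training-data score δ = f₁₁/(f₁₁+f₀₁) − f₁₀/(f₁₀+f₀₀) equals 0 while the prediction score δ̂ = (fʳ₁₁ + fʷ₀₁)/(f₁₁+f₀₁) − (fʳ₁₀ + fʷ₀₀)/(f₁₀+f₀₀) equals 1/2. (A witness: f₁₁ = f₀₁ = f₁₀ = f₀₀ = 1, with the single high-outcome tuple of the P=0 group predicted wrongly, fʷ₁₀ = 1, and all other predictions correct.) Hence a model trained on discrimination-free data can be discriminatory. -/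
import Mathlib

/-- A model trained on discrimination-free data (δ = 0) can be
discriminatory (δ̂ = 1/2): there is an imperfect split of counts witnessing
this. -/
theorem fair_data_discriminatory_model :
    ∃ fr11 fw11 fr01 fw01 fr10 fw10 fr00 fw00 f11 f01 f10 f00 : ℚ,
      0 ≤ fr11 ∧ 0 ≤ fw11 ∧ 0 ≤ fr01 ∧ 0 ≤ fw01 ∧
      0 ≤ fr10 ∧ 0 ≤ fw10 ∧ 0 ≤ fr00 ∧ 0 ≤ fw00 ∧
      f11 = fr11 + fw11 ∧ f01 = fr01 + fw01 ∧
      f10 = fr10 + fw10 ∧ f00 = fr00 + fw00 ∧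
      0 < f11 + f01 ∧ 0 < f10 + f00 ∧
      ¬(fw11 = 0 ∧ fw01 = 0 ∧ fw10 = 0 ∧ fw00 = 0) ∧
      f11 / (f11 + f01) - f10 / (f10 + f00) = 0 ∧
      (fr11 + fw01) / (f11 + f01) - (fr10 + fw00) / (f10 + f00) = 1 / 2 := by
  refine ⟨1, 0, 1, 0, 0, 1, 1, 0, 1, 1, 1, 1, ?_⟩
  norm_num
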